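/- Let P be a partial transformation semigroup on a finite set Q. Let x, y ∈ P be such that Q·x = Q·(xy). Then x R xy in P, i.e., xS¹ = xyS¹ where S = P. -/

import Mathlib

/-- Partial transformations on `Q` (partial functions `Q → Q`), with
left-to-right composition: `q·(fg) = (q·f)·g`. -/
def PTrans (Q : Type*) : Type _ := Q → Option Q

instance {Q : Type*} : Mul (PTrans Q) := ⟨fun f g => fun q => (f q).bind g⟩

instance {Q : Type*} : Semigroup (PTrans Q) where
  mul_assoc f g h := by
    funext q
    show ((f q).bind g).bind h = (f q).bind (fun x => (g x).bind h)
    cases f q <;> rfl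

/-- The image `R·f` of a set `R` under a partial transformation `f`. -/
def pApply {Q : Type*} (R : Set Q) (f : PTrans Q) : Set Q :=
  {q' | ∃ q ∈ R, f q = some q'}

/-- The right ideal `s·S¹` as a subset of `S¹ = WithOne S`. -/
def rIdeal {S : Type*} [Semigroup S] (s : S) : Set (WithOne S) :=
  {x | ∃ z : WithOne S, x = (s : WithOne S) * z}

/-- In a partial transformation semigroup `P` on a finite set
`Q`, if `x, y ∈ P` satisfy `Q·x = Q·(xy)`, then `x R xy` in `P`, i.e.
`x·P¹ = (xy)·P¹`. -/
theorem R_equiv_of_image_eq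
    (Q : Type) [Fintype Q] (P : Subsemigroup (PTrans Q)) (x y : ↥P)
    (h : pApply Set.univ (x : PTrans Q) = pApply Set.univ ((x : PTrans Q) * (y : PTrans Q))) :
    rIdeal x = rIdeal (x * y) := by
  classical
  have : Finite Q := Finite.of_fintype Q
  set fx : PTrans Q := (x : PTrans Q) with hfx
  set fy : PTrans Q := (y : PTrans Q) with hfy
  set T : Set Q := pApply Set.univ fx with hTdef
  have hmem : ∀ q a, fx q = some a → a ∈ T := fun q a hq => ⟨q, trivial, hq⟩
  have hsurj : ∀ t : T, ∃ s : T, fy s = some (t : Q) := by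
    rintro ⟨t, ht⟩
    obtain ⟨q, -, hq⟩ : t ∈ pApply Set.univ (fx * fy) := by rw [← h]; exact ht
    have hq' : (fx q).bind fy = some t := hq
    cases hx : fx q with
    | none => rw [hx] at hq'; exact absurd hq' (by intro h; cases h)
    | some a =>
      rw [hx] at hq'
      exact ⟨⟨a, hmem q a hx⟩, hq'⟩
  choose p hp using hsurj
  have pinj : Function.Injective p := by
    intro t1 t2 he
    have h1 := hp t1
    rw [he, hp t2] at h1
    exact Subtype.ext (Option.some.inj h1).symm
  have pbij : Function.Bijective p := Finite.injective_iff_bijective.mp pinj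
  let σ : Equiv.Perm T := Equiv.ofBijective p pbij
  let τ : Equiv.Perm T := σ.symm
  have hy : ∀ t : T, fy t = some ((τ t : T) : Q) := by
    intro t
    have h2 : p (σ.symm t) = t := σ.apply_symm_apply t
    calc fy t = fy (p (σ.symm t) : Q) := by rw [h2]
    _ = some ((σ.symm t : T) : Q) := hp (σ.symm t)
    _ = some ((τ t : T) : Q) := rfl
  -- iterated products y, y*y, ...
  let yk : ℕ → ↥P := fun k => Nat.rec y (fun _ ih => y * ih) k
  have hyk0 : yk 0 = y := rfl
  have hyksucc : ∀ k, yk (k + 1) = y * yk k := fun k => rfl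
  have heval : ∀ k (t : T), ((yk k).val : PTrans Q) (t : Q) = some (((τ ^ (k + 1)) t : T) : Q) := by
    intro k
    induction k with
    | zero =>
      intro t
      rw [hyk0, ← hfy, hy t, pow_one]
    | succ k ih =>
      intro t
      have hc : ((yk (k + 1)).val : PTrans Q) (t : Q)
          = ((y : PTrans Q) (t : Q)).bind ((yk k).val : PTrans Q) := by
        rw [hyksucc k]
        rfl
      rw [hc, ← hfy, hy t]
      show ((yk k).val : PTrans Q) ((τ t : T) : Q) = _
      rw [ih (τ t)]
      congr 1
  -- choose N with τ^N = 1 and N ≥ 2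
  have hτord : τ ^ (2 * orderOf τ) = 1 := by
    rw [mul_comm, pow_mul, pow_orderOf_eq_one, one_pow]
  have hordpos : 1 ≤ orderOf τ := orderOf_pos τ
  obtain ⟨m, hm⟩ : ∃ m, 2 * orderOf τ = (m + 1) + 1 := by
    refine ⟨2 * orderOf τ - 2, ?_⟩
    omega
  -- x * yk (m+1) = x
  have hfix : x * yk (m + 1) = x := by
    apply Subtype.ext
    show ((x * yk (m + 1)).val : PTrans Q) = fx
    funext q
    have hc : ((x * yk (m + 1)).val : PTrans Q) q = (fx q).bind ((yk (m + 1)).val : PTrans Q) := rfl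
    rw [hc]
    cases hxq : fx q with
    | none => rfl
    | some a =>
      have haT : a ∈ T := hmem q a hxq
      show ((yk (m + 1)).val : PTrans Q) ((⟨a, haT⟩ : T) : Q) = some a
      rw [heval (m + 1) ⟨a, haT⟩, ← hm, hτord]
      rfl
  -- conclude
  ext w
  constructor
  · rintro ⟨z, rfl⟩
    refine ⟨(WithOne.coe (yk m)) * z, ?_⟩
    have hx2 : x = (x * y) * yk m := by
      rw [mul_assoc, ← hyksucc m, hfix]
    conv_lhs => rw [hx2]
    rw [WithOne.coe_mul, mul_assoc]
  · rintro ⟨z, rfl⟩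
    exact ⟨(WithOne.coe y) * z, by rw [WithOne.coe_mul, mul_assoc]⟩
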